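/- Let W = {σ ∈ O(ℝ⁴) : σ((D₄)₂) = (D₄)₂} be the automorphism group of the D₄ root system. Then P₆ is a nonzero harmonic homogeneous polynomial of degree 6 satisfying P₆∘σ = P₆ for all σ ∈ W, and every harmonic homogeneous polynomial of degree 6 on ℝ⁴ that is invariant under W is a real scalar multiple of P₆ (the space of W-invariant degree-6 harmonics is one-dimensional, spanned by P₆). -/

import Mathlib

noncomputable section

/-- Standard Euclidean inner product on `ℝ^d`. -/
def dotp {d : ℕ} (x y : Fin d → ℝ) : ℝ := ∑ i, x i * y i

/-- A polynomial in `d` real variables is harmonic if its Laplacian vanishes. -/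
def IsHarmonic {d : ℕ} (P : MvPolynomial (Fin d) ℝ) : Prop :=
  ∑ i, MvPolynomial.pderiv i (MvPolynomial.pderiv i P) = 0

/-- `X ⊆ S^{d-1}` is a spherical design of harmonic index `T`:
for every `ℓ ∈ T` and every homogeneous harmonic polynomial `P` of degree `ℓ`,
the sum of `P` over `X` vanishes. -/
def IsSphDesign {d : ℕ} (T : Set ℕ) (X : Set (Fin d → ℝ)) : Prop :=
  ∀ ℓ ∈ T, ∀ P : MvPolynomial (Fin d) ℝ, P.IsHomogeneous ℓ → IsHarmonic P →
    ∑ᶠ x ∈ X, MvPolynomial.eval x P = 0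

/-- The `D₄` lattice: integer vectors in `ℝ⁴` with even coordinate sum. -/
def D4 : Set (Fin 4 → ℝ) :=
  {x | (∀ i, ∃ n : ℤ, x i = (n : ℝ)) ∧ ∃ k : ℤ, (∑ i, x i) = 2 * (k : ℝ)}

/-- The `m`-shell of the `D₄` lattice. -/
def D4shell (m : ℕ) : Set (Fin 4 → ℝ) := {x ∈ D4 | ∑ i, (x i) ^ 2 = (m : ℝ)}

/-- The normalized `N`-shell `(1/√N)·(D₄)_N` of the `D₄` lattice. -/
def normShell (N : ℕ) : Set (Fin 4 → ℝ) :=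
  (fun x => (Real.sqrt N)⁻¹ • x) '' D4shell N

/-- The degree-6 harmonic polynomial `P₆` spanning the `W(F₄)`-invariant harmonics. -/
def P6 : MvPolynomial (Fin 4) ℝ :=
  letI x : Fin 4 → MvPolynomial (Fin 4) ℝ := fun i => MvPolynomial.X i
  (x 0 ^ 6 + x 1 ^ 6 + x 2 ^ 6 + x 3 ^ 6)
    - 5 * (x 0 ^ 4 * (x 1 ^ 2 + x 2 ^ 2 + x 3 ^ 2)
        + x 0 ^ 2 * (x 1 ^ 4 + x 2 ^ 4 + x 3 ^ 4)
        + (x 1 ^ 4 + x 2 ^ 2 * x 3 ^ 2) * (x 2 ^ 2 + x 3 ^ 2)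
        + x 1 ^ 2 * (x 2 ^ 4 + x 3 ^ 4))
    + 30 * (x 0 ^ 2 * (x 1 ^ 2 * x 2 ^ 2 + x 1 ^ 2 * x 3 ^ 2 + x 2 ^ 2 * x 3 ^ 2)
        + x 1 ^ 2 * x 2 ^ 2 * x 3 ^ 2)

/-! ### Auxiliary material -/

open MvPolynomial

namespace StmtAux

/-- The 24 roots of `D₄`, as integer vectors. -/
def L24 : List (Fin 4 → ℤ) :=
  [![1,1,0,0], ![1,-1,0,0], ![-1,1,0,0], ![-1,-1,0,0],
   ![1,0,1,0], ![1,0,-1,0], ![-1,0,1,0], ![-1,0,-1,0],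
   ![1,0,0,1], ![1,0,0,-1], ![-1,0,0,1], ![-1,0,0,-1],
   ![0,1,1,0], ![0,1,-1,0], ![0,-1,1,0], ![0,-1,-1,0],
   ![0,1,0,1], ![0,1,0,-1], ![0,-1,0,1], ![0,-1,0,-1],
   ![0,0,1,1], ![0,0,1,-1], ![0,0,-1,1], ![0,0,-1,-1]]

def T24 : Finset (Fin 4 → ℤ) := ⟨(L24 : Multiset (Fin 4 → ℤ)), by decide⟩

def ι : (Fin 4 → ℤ) → (Fin 4 → ℝ) := fun n i => (n i : ℝ)

lemma ι_inj : Function.Injective ι := by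
  intro a b h; funext i; have := congrFun h i; simpa [ι] using this

def S24 : Finset (Fin 4 → ℝ) := T24.image ι

lemma T24sq : ∀ n ∈ T24, (n 0)^2 + (n 1)^2 + (n 2)^2 + (n 3)^2 = 2 := by decide
lemma T24ev : ∀ n ∈ T24, (n 0 + n 1 + n 2 + n 3) % 2 = 0 := by decide

lemma shell_eq : D4shell 2 = ↑S24 := by
  ext x
  constructor
  · rintro ⟨⟨hint, -⟩, hsum⟩
    choose n hn using hint
    have hx : x = ι n := funext hn
    subst hx
    have hs : (n 0)^2 + (n 1)^2 + (n 2)^2 + (n 3)^2 = 2 := by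
      have h2 : ((n 0:ℝ))^2 + (n 1:ℝ)^2 + (n 2:ℝ)^2 + (n 3:ℝ)^2 = 2 := by
        simpa [ι, Fin.sum_univ_four] using hsum
      exact_mod_cast h2
    have hrep : n = ![n 0, n 1, n 2, n 3] := by
      funext i; fin_cases i <;> rfl
    rw [hrep]
    obtain ⟨a, ha⟩ : ∃ a, n 0 = a := ⟨_, rfl⟩
    obtain ⟨b, hb⟩ : ∃ b, n 1 = b := ⟨_, rfl⟩
    obtain ⟨c, hc⟩ : ∃ c, n 2 = c := ⟨_, rfl⟩
    obtain ⟨d, hd⟩ : ∃ d, n 3 = d := ⟨_, rfl⟩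
    rw [ha, hb, hc, hd] at hs ⊢
    have h0a : -1 ≤ a := by nlinarith
    have h0b : a ≤ 1 := by nlinarith
    have h1a : -1 ≤ b := by nlinarith
    have h1b : b ≤ 1 := by nlinarith
    have h2a : -1 ≤ c := by nlinarith
    have h2b : c ≤ 1 := by nlinarith
    have h3a : -1 ≤ d := by nlinarith
    have h3b : d ≤ 1 := by nlinarith
    clear ha hb hc hd hrep hsum hn
    interval_cases a <;> interval_cases b <;> interval_cases c <;> interval_cases d <;>
      first
        | exact Finset.mem_coe.2 (Finset.mem_image_of_mem ι (by decide))
        | norm_num at hs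
  · intro hx
    obtain ⟨n, hn, rfl⟩ := Finset.mem_image.1 (Finset.mem_coe.1 hx)
    have hsq := T24sq n hn
    have hev := T24ev n hn
    refine ⟨⟨fun i => ⟨n i, rfl⟩, ⟨(n 0 + n 1 + n 2 + n 3)/2, ?_⟩⟩, ?_⟩
    · have h2 : (n 0 + n 1 + n 2 + n 3) = 2 * ((n 0 + n 1 + n 2 + n 3)/2) := by omega
      rw [Fin.sum_univ_four]
      show (↑(n 0) + ↑(n 1) + ↑(n 2) + ↑(n 3) : ℝ) = _
      exact_mod_cast congrArg (fun z : ℤ => (z : ℝ)) h2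
    · rw [Fin.sum_univ_four]
      show (↑(n 0):ℝ)^2 + (↑(n 1):ℝ)^2 + (↑(n 2):ℝ)^2 + (↑(n 3):ℝ)^2 = ((2:ℕ):ℝ)
      exact_mod_cast hsq

set_option maxHeartbeats 2000000 in
lemma key (v : Fin 4 → ℝ) :
    MvPolynomial.eval v P6 = 5 * (dotp v v)^3 - (1/3) * ∑ x ∈ S24, (dotp v x)^6 := by
  rw [S24, Finset.sum_image (fun a _ b _ h => ι_inj h)]
  have hT : ∑ n ∈ T24, (dotp v (ι n))^6 = (L24.map (fun n => (dotp v (ι n))^6)).sum := rfl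
  rw [hT]
  simp only [L24, List.map_cons, List.map_nil, List.sum_cons, List.sum_nil]
  simp only [dotp, ι, Fin.sum_univ_four, Matrix.cons_val_zero, Matrix.cons_val_one,
    Matrix.head_cons, Matrix.cons_val_two, Matrix.tail_cons, Matrix.cons_val_three]
  simp [P6]
  ring

/-- Invariance of `P6` under any orthogonal map preserving the root system. -/
lemma inv_general (σ : (Fin 4 → ℝ) →ₗ[ℝ] (Fin 4 → ℝ))
    (horth : ∀ x y, dotp (σ x) (σ y) = dotp x y)
    (hshell : σ '' D4shell 2 = D4shell 2) (v : Fin 4 → ℝ) :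
    MvPolynomial.eval (σ v) P6 = MvPolynomial.eval v P6 := by
  have hker : ∀ z : Fin 4 → ℝ, dotp z z = 0 → z = 0 := by
    intro z hz
    funext j
    have hnn : ∀ i ∈ Finset.univ, (0:ℝ) ≤ z i * z i := fun i _ => mul_self_nonneg _
    have := (Finset.sum_eq_zero_iff_of_nonneg hnn).1 hz j (Finset.mem_univ j)
    have : z j * z j = 0 := this
    have := mul_self_eq_zero.mp this
    simpa using this
  have hinj : Function.Injective σ := by
    intro x y h
    have h0 : dotp (σ (x - y)) (σ (x - y)) = 0 := by
      rw [map_sub, h, sub_self]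
      simp [dotp]
    have := hker (x - y) (by rw [← horth]; exact h0)
    exact sub_eq_zero.mp this
  have himg : Finset.image σ S24 = S24 := by
    apply Finset.coe_injective
    rw [Finset.coe_image, ← shell_eq, hshell, shell_eq]
  have hsum : ∑ x ∈ S24, (dotp (σ v) x)^6 = ∑ x ∈ S24, (dotp v x)^6 := by
    conv_lhs => rw [← himg]
    rw [Finset.sum_image (fun a _ b _ h => hinj h)]
    exact Finset.sum_congr rfl (fun x _ => by rw [horth])
  rw [key, key, horth, hsum]

/-! ### Linear symmetries -/

def flipL (i : Fin 4) : (Fin 4 → ℝ) →ₗ[ℝ] (Fin 4 → ℝ) where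
  toFun v := fun j => if j = i then -v j else v j
  map_add' u v := by funext j; by_cases h : j = i <;> simp [h] <;> ring
  map_smul' c v := by funext j; by_cases h : j = i <;> simp [h]

def permL (e : Equiv.Perm (Fin 4)) : (Fin 4 → ℝ) →ₗ[ℝ] (Fin 4 → ℝ) :=
  LinearMap.funLeft ℝ ℝ e

lemma flipL_orth (i : Fin 4) : ∀ x y, dotp (flipL i x) (flipL i y) = dotp x y := by
  intro x y
  unfold dotp flipL
  apply Finset.sum_congr rfl
  intro j _
  simp only [LinearMap.coe_mk, AddHom.coe_mk]
  split_ifs <;> ring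

lemma permL_orth (e : Equiv.Perm (Fin 4)) : ∀ x y, dotp (permL e x) (permL e y) = dotp x y := by
  intro x y
  unfold dotp permL
  simp only [LinearMap.funLeft_apply]
  exact Fintype.sum_equiv e _ _ (fun j => rfl)

lemma flipL_invol (i : Fin 4) : ∀ x, flipL i (flipL i x) = x := by
  intro x; funext j
  simp only [flipL, LinearMap.coe_mk, AddHom.coe_mk]
  split_ifs <;> ring

lemma flipL_mem (i : Fin 4) {x} (hx : x ∈ D4shell 2) : flipL i x ∈ D4shell 2 := by
  obtain ⟨⟨hint, k, hk⟩, hsum⟩ := hx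
  obtain ⟨ni, hni⟩ := hint i
  refine ⟨⟨fun j => ?_, ⟨k - ni, ?_⟩⟩, ?_⟩
  · obtain ⟨n, hn⟩ := hint j
    exact if h : j = i then ⟨-n, by subst h; simp [flipL, hn]⟩ else ⟨n, by simp [flipL, h, hn]⟩
  · have hsplit : ∑ j, flipL i x j = (∑ j, x j) - 2 * x i := by
      simp only [flipL, LinearMap.coe_mk, AddHom.coe_mk]
      rw [Finset.sum_congr rfl (fun j _ => show (if j = i then -x j else x j)
        = x j - (if j = i then 2 * x j else 0) by split_ifs <;> ring)]
      rw [Finset.sum_sub_distrib, Finset.sum_ite_eq' Finset.univ i (fun j => 2 * x j)]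
      simp
    rw [hsplit, hk, hni]
    push_cast
    ring
  · have : ∑ j, (flipL i x j)^2 = ∑ j, (x j)^2 := by
      apply Finset.sum_congr rfl
      intro j _
      simp only [flipL, LinearMap.coe_mk, AddHom.coe_mk]
      split_ifs <;> ring
    rw [this]; exact hsum

lemma permL_mem (e : Equiv.Perm (Fin 4)) {x} (hx : x ∈ D4shell 2) : permL e x ∈ D4shell 2 := by
  obtain ⟨⟨hint, k, hk⟩, hsum⟩ := hx
  refine ⟨⟨fun j => hint (e j), ⟨k, ?_⟩⟩, ?_⟩
  · rw [← hk]
    exact Fintype.sum_equiv e _ _ (fun j => rfl)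
  · rw [← hsum]
    exact Fintype.sum_equiv e _ _ (fun j => rfl)

lemma flipL_shell (i : Fin 4) : (flipL i) '' D4shell 2 = D4shell 2 := by
  apply Set.Subset.antisymm
  · rintro _ ⟨x, hx, rfl⟩; exact flipL_mem i hx
  · intro x hx
    exact ⟨flipL i x, flipL_mem i hx, flipL_invol i x⟩

lemma permL_shell (e : Equiv.Perm (Fin 4)) : (permL e) '' D4shell 2 = D4shell 2 := by
  apply Set.Subset.antisymm
  · rintro _ ⟨x, hx, rfl⟩; exact permL_mem e hx
  · intro x hx
    refine ⟨permL e⁻¹ x, permL_mem e⁻¹ hx, ?_⟩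
    funext j
    simp [permL, LinearMap.funLeft_apply]

/-! ### Coefficient machinery -/

lemma eval_bind1 (v : Fin 4 → ℝ) (s : Fin 4 → MvPolynomial (Fin 4) ℝ)
    (P : MvPolynomial (Fin 4) ℝ) :
    eval v (bind₁ s P) = eval (fun i => eval v (s i)) P := by
  have h := eval₂Hom_bind₁ (RingHom.id ℝ) v s P
  rw [MvPolynomial.eval]
  exact h

def flipS (i : Fin 4) : Fin 4 → MvPolynomial (Fin 4) ℝ :=
  fun j => if j = i then -X j else X j

lemma coeff_bind₁_flipS (i : Fin 4) (P : MvPolynomial (Fin 4) ℝ) (m : Fin 4 →₀ ℕ) :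
    coeff m (bind₁ (flipS i) P) = (-1 : ℝ)^(m i) * coeff m P := by
  induction P using MvPolynomial.induction_on' with
  | add p q hp hq => simp [map_add, coeff_add, hp, hq]; ring
  | monomial s a =>
    rw [bind₁_monomial]
    have hstep : ∀ j, (flipS i j) ^ (s j)
        = C (if j = i then ((-1:ℝ))^(s j) else 1) * (X j) ^ (s j) := by
      intro j
      unfold flipS
      split_ifs with h
      · rw [neg_pow]
        simp [map_pow, mul_comm]
      · simp
    rw [Finset.prod_congr rfl (fun j _ => hstep j), Finset.prod_mul_distrib, ← map_prod,
      Finset.prod_ite_eq']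
    have hC : (if i ∈ s.support then ((-1:ℝ))^(s i) else 1) = ((-1:ℝ))^(s i) := by
      split_ifs with h
      · rfl
      · simp [Finsupp.notMem_support_iff.1 h]
    rw [hC]
    have hmono : C a * (C ((-1:ℝ)^(s i)) * ∏ j ∈ s.support, (X j : MvPolynomial (Fin 4) ℝ) ^ (s j))
        = C ((-1:ℝ)^(s i)) * monomial s a := by
      rw [monomial_eq]
      ring_nf
      rw [Finsupp.prod]
    rw [hmono, coeff_C_mul, coeff_monomial]
    by_cases h : s = m
    · subst h; simp
    · simp [h]

lemma coeff_pderiv (i : Fin 4) (P : MvPolynomial (Fin 4) ℝ) (m : Fin 4 →₀ ℕ) :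
    coeff m (pderiv i P) = (m i + 1 : ℝ) * coeff (m + Finsupp.single i 1) P := by
  induction P using MvPolynomial.induction_on' with
  | add p q hp hq => simp [map_add, coeff_add, hp, hq]; ring
  | monomial s a =>
    rw [pderiv_monomial]
    by_cases h : s = m + Finsupp.single i 1
    · subst h
      have h1 : (m + Finsupp.single i 1) - Finsupp.single i 1 = m := by
        ext j; simp [Finsupp.single_apply]
      have h2 : ((m + Finsupp.single i 1 : Fin 4 →₀ ℕ)) i = m i + 1 := by simp
      rw [h1, h2, coeff_monomial, coeff_monomial]
      simp
      ring
    · rw [coeff_monomial, coeff_monomial, if_neg h]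
      by_cases h2 : s - Finsupp.single i 1 = m
      · rw [if_pos h2]
        have hsi : s i = 0 := by
          by_contra hne
          apply h
          ext j
          have := DFunLike.congr_fun h2 j
          simp [Finsupp.single_apply] at this ⊢
          rcases eq_or_ne i j with rfl | hji <;> simp_all <;> omega
        simp [hsi]
      · rw [if_neg h2, mul_zero]

lemma harm_coeff {Q : MvPolynomial (Fin 4) ℝ} (h : IsHarmonic Q) (m : Fin 4 →₀ ℕ) :
    ∑ i, ((m i + 1) * (m i + 2) : ℝ) * coeff (m + Finsupp.single i 2) Q = 0 := by
  have h0 : coeff m (∑ i, pderiv i (pderiv i Q)) = 0 := by rw [h]; simp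
  rw [MvPolynomial.coeff_sum] at h0
  rw [← h0]
  apply Finset.sum_congr rfl
  intro i _
  rw [coeff_pderiv, coeff_pderiv]
  have e1 : ((m + Finsupp.single i 1 : Fin 4 →₀ ℕ)) i = m i + 1 := by simp
  have e2 : m + Finsupp.single i 1 + Finsupp.single i 1 = m + Finsupp.single i 2 := by
    ext j; simp [Finsupp.single_apply]; split <;> omega
  rw [e1, e2]
  push_cast
  ring

abbrev E : (Fin 4 → ℕ) → (Fin 4 →₀ ℕ) := fun k => Finsupp.equivFunOnFinite.symm k

set_option maxHeartbeats 4000000 in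
lemma zero_of_relations (Q : MvPolynomial (Fin 4) ℝ)
    (hhom : Q.IsHomogeneous 6)
    (hharm : IsHarmonic Q)
    (hflip : ∀ i : Fin 4, bind₁ (flipS i) Q = Q)
    (hperm : ∀ e : Equiv.Perm (Fin 4), rename (⇑e) Q = Q)
    (ha : coeff (E ![6,0,0,0]) Q = 0) :
    Q = 0 := by
  set c : (Fin 4 → ℕ) → ℝ := fun k => coeff (E k) Q with hcdef
  have hEapp : ∀ (k : Fin 4 → ℕ) (i : Fin 4), (E k) i = k i := fun k i => rfl
  have hcflip : ∀ (k : Fin 4 → ℕ) (i : Fin 4), Odd (k i) → c k = 0 := by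
    intro k i hodd
    have h := coeff_bind₁_flipS i Q (E k)
    rw [hflip i, hEapp, hodd.neg_one_pow] at h
    have : c k = - c k := by simpa [hcdef] using h
    linarith
  have hsym : ∀ k p : Fin 4 → ℕ, (∃ e : Equiv.Perm (Fin 4), ∀ j, k (e.symm j) = p j) →
      c p = c k := by
    rintro k p ⟨e, he⟩
    have h := coeff_rename_mapDomain (⇑e) e.injective Q (E k)
    rw [hperm] at h
    have hmap : Finsupp.mapDomain (⇑e) (E k) = E p := by
      ext j
      rw [Finsupp.mapDomain_equiv_apply]
      simp [he j]
    rw [hmap] at h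
    exact h
  have hΔc : ∀ k : Fin 4 → ℕ,
      ∑ i, (((k i : ℝ) + 1) * ((k i : ℝ) + 2)) * c (fun j => k j + if i = j then 2 else 0) = 0 := by
    intro k
    have h := harm_coeff hharm (E k)
    rw [← h]
    apply Finset.sum_congr rfl
    intro i _
    have hadd : E k + Finsupp.single i 2 = E (fun j => k j + if i = j then 2 else 0) := by
      ext j; simp [Finsupp.single_apply]
    rw [hadd, hEapp]
  have h6a : c ![6,0,0,0] = 0 := ha
  have h6b : c ![0,6,0,0] = 0 := (hsym _ _ (by decide)).trans h6a
  have h6c : c ![0,0,6,0] = 0 := (hsym _ _ (by decide)).trans h6a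
  have h6d : c ![0,0,0,6] = 0 := (hsym _ _ (by decide)).trans h6a
  have h42 : c ![4,2,0,0] = 0 := by
    have hrel := hΔc ![4,0,0,0]
    rw [Fin.sum_univ_four] at hrel
    rw [show (fun j => ![4,0,0,0] j + if (0:Fin 4) = j then 2 else 0) = ![6,0,0,0] from by decide,
        show (fun j => ![4,0,0,0] j + if (1:Fin 4) = j then 2 else 0) = ![4,2,0,0] from by decide,
        show (fun j => ![4,0,0,0] j + if (2:Fin 4) = j then 2 else 0) = ![4,0,2,0] from by decide,
        show (fun j => ![4,0,0,0] j + if (3:Fin 4) = j then 2 else 0) = ![4,0,0,2] from by decide]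
        at hrel
    have e1 : c ![4,0,2,0] = c ![4,2,0,0] := hsym _ _ (by decide)
    have e2 : c ![4,0,0,2] = c ![4,2,0,0] := hsym _ _ (by decide)
    rw [e1, e2, h6a] at hrel
    norm_num [Matrix.cons_val_two, Matrix.cons_val_three, Matrix.tail_cons, Matrix.head_cons] at hrel
    linarith
  have h222 : c ![2,2,2,0] = 0 := by
    have hrel := hΔc ![2,2,0,0]
    rw [Fin.sum_univ_four] at hrel
    rw [show (fun j => ![2,2,0,0] j + if (0:Fin 4) = j then 2 else 0) = ![4,2,0,0] from by decide,
        show (fun j => ![2,2,0,0] j + if (1:Fin 4) = j then 2 else 0) = ![2,4,0,0] from by decide,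
        show (fun j => ![2,2,0,0] j + if (2:Fin 4) = j then 2 else 0) = ![2,2,2,0] from by decide,
        show (fun j => ![2,2,0,0] j + if (3:Fin 4) = j then 2 else 0) = ![2,2,0,2] from by decide]
        at hrel
    have e1 : c ![2,4,0,0] = c ![4,2,0,0] := hsym _ _ (by decide)
    have e2 : c ![2,2,0,2] = c ![2,2,2,0] := hsym _ _ (by decide)
    rw [e1, e2, h42] at hrel
    norm_num [Matrix.cons_val_two, Matrix.cons_val_three, Matrix.tail_cons, Matrix.head_cons] at hrel
    linarith
  have q1 : c ![4,0,2,0] = 0 := (hsym _ _ (by decide)).trans h42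
  have q2 : c ![4,0,0,2] = 0 := (hsym _ _ (by decide)).trans h42
  have q3 : c ![2,4,0,0] = 0 := (hsym _ _ (by decide)).trans h42
  have q4 : c ![0,4,2,0] = 0 := (hsym _ _ (by decide)).trans h42
  have q5 : c ![0,4,0,2] = 0 := (hsym _ _ (by decide)).trans h42
  have q6 : c ![2,0,4,0] = 0 := (hsym _ _ (by decide)).trans h42
  have q7 : c ![0,2,4,0] = 0 := (hsym _ _ (by decide)).trans h42
  have q8 : c ![0,0,4,2] = 0 := (hsym _ _ (by decide)).trans h42
  have q9 : c ![2,0,0,4] = 0 := (hsym _ _ (by decide)).trans h42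
  have q10 : c ![0,2,0,4] = 0 := (hsym _ _ (by decide)).trans h42
  have q11 : c ![0,0,2,4] = 0 := (hsym _ _ (by decide)).trans h42
  have r1 : c ![2,2,0,2] = 0 := (hsym _ _ (by decide)).trans h222
  have r2 : c ![2,0,2,2] = 0 := (hsym _ _ (by decide)).trans h222
  have r3 : c ![0,2,2,2] = 0 := (hsym _ _ (by decide)).trans h222
  have main : ∀ k : Fin 4 → ℕ, c k = 0 := by
    intro k
    by_cases hdeg : (∑ j, k j) = 6
    · by_cases ho0 : Odd (k 0)
      · exact hcflip k 0 ho0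
      by_cases ho1 : Odd (k 1)
      · exact hcflip k 1 ho1
      by_cases ho2 : Odd (k 2)
      · exact hcflip k 2 ho2
      by_cases ho3 : Odd (k 3)
      · exact hcflip k 3 ho3
      rw [Nat.not_odd_iff_even] at ho0 ho1 ho2 ho3
      rw [Fin.sum_univ_four] at hdeg
      obtain ⟨n0, hn0⟩ := ho0
      obtain ⟨n1, hn1⟩ := ho1
      obtain ⟨n2, hn2⟩ := ho2
      obtain ⟨n3, hn3⟩ := ho3
      have hkrep : k = ![n0 + n0, n1 + n1, n2 + n2, n3 + n3] := by
        funext j; fin_cases j <;> simp [hn0, hn1, hn2, hn3]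
      rw [hkrep]
      rw [hn0, hn1, hn2, hn3] at hdeg
      have hb0 : n0 ≤ 3 := by omega
      have hb1 : n1 ≤ 3 := by omega
      have hb2 : n2 ≤ 3 := by omega
      have hb3 : n3 ≤ 3 := by omega
      have hs3 : n0 + n1 + n2 + n3 = 3 := by omega
      clear hkrep hn0 hn1 hn2 hn3 hdeg
      interval_cases n0 <;> interval_cases n1 <;> interval_cases n2 <;> interval_cases n3 <;>
        first | omega | (norm_num; assumption)
    · have hdeg2 : (E k).degree = ∑ j, k j := by
        rw [Finsupp.degree]
        exact Finset.sum_subset (Finset.subset_univ _)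
          (fun i _ h => Finsupp.notMem_support_iff.mp h)
      have hd : (E k).degree ≠ 6 := by rw [hdeg2]; exact hdeg
      exact hhom.coeff_eq_zero hd
  ext m
  rw [coeff_zero]
  have hmain := main ⇑m
  have h2 : E ⇑m = m := Finsupp.equivFunOnFinite.symm_apply_apply m
  rw [hcdef] at hmain
  simpa [h2] using hmain

set_option maxHeartbeats 1000000 in
lemma coeff_P6_top : coeff (Finsupp.single (0 : Fin 4) 6) P6 = 1 := by
  have h5 : (5 : MvPolynomial (Fin 4) ℝ) = C 5 := (map_ofNat C 5).symm
  have h30 : (30 : MvPolynomial (Fin 4) ℝ) = C 30 := (map_ofNat C 30).symm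
  simp only [P6, h5, h30, X_pow_eq_monomial, monomial_mul, mul_add, add_mul, C_mul_monomial,
    coeff_add, coeff_sub, coeff_monomial, mul_one, one_mul]
  norm_num [Finsupp.ext_iff, Fin.forall_fin_succ, Finsupp.single_apply, Finsupp.add_apply]
  simp +decide

lemma E_6000 : E ![6,0,0,0] = Finsupp.single (0 : Fin 4) 6 := by
  ext j
  fin_cases j <;> simp [Finsupp.single_apply]

set_option maxHeartbeats 2000000 in
lemma P6_homog : P6.IsHomogeneous 6 := by
  have hX : ∀ (i : Fin 4) (k : ℕ), ((X i : MvPolynomial (Fin 4) ℝ)^k).IsHomogeneous k := by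
    intro i k; simpa using (isHomogeneous_X ℝ i).pow k
  have h5 : ((5 : MvPolynomial (Fin 4) ℝ)).IsHomogeneous 0 := by
    have := isHomogeneous_C (σ := Fin 4) (R := ℝ) (5 : ℝ); rwa [map_ofNat C 5] at this
  have h30 : ((30 : MvPolynomial (Fin 4) ℝ)).IsHomogeneous 0 := by
    have := isHomogeneous_C (σ := Fin 4) (R := ℝ) (30 : ℝ); rwa [map_ofNat C 30] at this
  show (((X 0 ^ 6 + X 1 ^ 6 + X 2 ^ 6 + X 3 ^ 6)
    - 5 * (X 0 ^ 4 * (X 1 ^ 2 + X 2 ^ 2 + X 3 ^ 2)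
        + X 0 ^ 2 * (X 1 ^ 4 + X 2 ^ 4 + X 3 ^ 4)
        + (X 1 ^ 4 + X 2 ^ 2 * X 3 ^ 2) * (X 2 ^ 2 + X 3 ^ 2)
        + X 1 ^ 2 * (X 2 ^ 4 + X 3 ^ 4))
    + 30 * (X 0 ^ 2 * (X 1 ^ 2 * X 2 ^ 2 + X 1 ^ 2 * X 3 ^ 2 + X 2 ^ 2 * X 3 ^ 2)
        + X 1 ^ 2 * X 2 ^ 2 * X 3 ^ 2) : MvPolynomial (Fin 4) ℝ)).IsHomogeneous 6
  refine (((((hX 0 6).add (hX 1 6)).add (hX 2 6)).add (hX 3 6)).sub ?_).add ?_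
  · exact (h5.mul (((((hX 0 4).mul (((hX 1 2).add (hX 2 2)).add (hX 3 2))).add
      ((hX 0 2).mul (((hX 1 4).add (hX 2 4)).add (hX 3 4)))).add
      (((hX 1 4).add ((hX 2 2).mul (hX 3 2))).mul ((hX 2 2).add (hX 3 2)))).add
      ((hX 1 2).mul ((hX 2 4).add (hX 3 4)))))
  · exact (h30.mul ((((hX 0 2).mul ((((hX 1 2).mul (hX 2 2)).add ((hX 1 2).mul (hX 3 2))).add
      ((hX 2 2).mul (hX 3 2))))).add (((hX 1 2).mul (hX 2 2)).mul (hX 3 2))))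

set_option maxHeartbeats 2000000 in
lemma P6_harm : IsHarmonic P6 := by
  have h0 : ∀ i : Fin 4, pderiv i (X i : MvPolynomial (Fin 4) ℝ) = 1 := fun i => pderiv_X_self i
  have h01 : pderiv (0:Fin 4) (X 1 : MvPolynomial (Fin 4) ℝ) = 0 := pderiv_X_of_ne (by decide)
  have h02 : pderiv (0:Fin 4) (X 2 : MvPolynomial (Fin 4) ℝ) = 0 := pderiv_X_of_ne (by decide)
  have h03 : pderiv (0:Fin 4) (X 3 : MvPolynomial (Fin 4) ℝ) = 0 := pderiv_X_of_ne (by decide)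
  have h10 : pderiv (1:Fin 4) (X 0 : MvPolynomial (Fin 4) ℝ) = 0 := pderiv_X_of_ne (by decide)
  have h12 : pderiv (1:Fin 4) (X 2 : MvPolynomial (Fin 4) ℝ) = 0 := pderiv_X_of_ne (by decide)
  have h13 : pderiv (1:Fin 4) (X 3 : MvPolynomial (Fin 4) ℝ) = 0 := pderiv_X_of_ne (by decide)
  have h20 : pderiv (2:Fin 4) (X 0 : MvPolynomial (Fin 4) ℝ) = 0 := pderiv_X_of_ne (by decide)
  have h21 : pderiv (2:Fin 4) (X 1 : MvPolynomial (Fin 4) ℝ) = 0 := pderiv_X_of_ne (by decide)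
  have h23 : pderiv (2:Fin 4) (X 3 : MvPolynomial (Fin 4) ℝ) = 0 := pderiv_X_of_ne (by decide)
  have h30 : pderiv (3:Fin 4) (X 0 : MvPolynomial (Fin 4) ℝ) = 0 := pderiv_X_of_ne (by decide)
  have h31 : pderiv (3:Fin 4) (X 1 : MvPolynomial (Fin 4) ℝ) = 0 := pderiv_X_of_ne (by decide)
  have h32 : pderiv (3:Fin 4) (X 2 : MvPolynomial (Fin 4) ℝ) = 0 := pderiv_X_of_ne (by decide)
  have hofnat : ∀ (i : Fin 4) (n : ℕ) [n.AtLeastTwo],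
      pderiv i (OfNat.ofNat n : MvPolynomial (Fin 4) ℝ) = 0 := by
    intro i n _
    conv_lhs => rw [← Nat.cast_ofNat (R := MvPolynomial (Fin 4) ℝ)]
    exact Derivation.map_natCast _ _
  show  ∑ i : Fin 4, pderiv i (pderiv i P6) = 0
  rw [Fin.sum_univ_four]
  simp only [P6, map_add, map_sub, map_mul, Derivation.leibniz_pow, Derivation.leibniz,
    hofnat, Derivation.map_natCast, h0, h01, h02, h03, h10, h12, h13, h20, h21, h23, h30, h31, h32,
    mul_zero, zero_mul, mul_one, one_mul, add_zero, zero_add, smul_zero, smul_eq_mul,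
    nsmul_eq_mul, map_zero, sub_zero, map_natCast, map_ofNat]
  ring

end StmtAux

open StmtAux in
theorem stmt_14 :
    P6 ≠ 0 ∧ P6.IsHomogeneous 6 ∧ IsHarmonic P6 ∧
    (∀ σ : (Fin 4 → ℝ) →ₗ[ℝ] (Fin 4 → ℝ),
      (∀ x y, dotp (σ x) (σ y) = dotp x y) → σ '' D4shell 2 = D4shell 2 →
      ∀ v, MvPolynomial.eval (σ v) P6 = MvPolynomial.eval v P6) ∧
    (∀ P : MvPolynomial (Fin 4) ℝ, P.IsHomogeneous 6 → IsHarmonic P →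
      (∀ σ : (Fin 4 → ℝ) →ₗ[ℝ] (Fin 4 → ℝ),
        (∀ x y, dotp (σ x) (σ y) = dotp x y) → σ '' D4shell 2 = D4shell 2 →
        ∀ v, MvPolynomial.eval (σ v) P = MvPolynomial.eval v P) →
      ∃ c : ℝ, P = c • P6) := by
  refine ⟨?_, P6_homog, P6_harm, inv_general, ?_⟩
  · intro h
    have h1 : MvPolynomial.eval ![1,0,0,0] P6 = 1 := by simp [P6]
    rw [h] at h1
    simp at h1
  · intro P hPhom hPharm hPinv
    set a : ℝ := coeff (Finsupp.single (0 : Fin 4) 6) P with hadef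
    refine ⟨a, ?_⟩
    set Q : MvPolynomial (Fin 4) ℝ := P - C a * P6 with hQdef
    have hQinv : ∀ σ : (Fin 4 → ℝ) →ₗ[ℝ] (Fin 4 → ℝ),
        (∀ x y, dotp (σ x) (σ y) = dotp x y) → σ '' D4shell 2 = D4shell 2 →
        ∀ v, MvPolynomial.eval (σ v) Q = MvPolynomial.eval v Q := by
      intro σ ho hs v
      rw [hQdef, map_sub, map_sub, map_mul, map_mul, eval_C, eval_C,
        hPinv σ ho hs v, inv_general σ ho hs v]
    have hQflip : ∀ i : Fin 4, bind₁ (flipS i) Q = Q := by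
      intro i
      apply MvPolynomial.funext
      intro v
      rw [eval_bind1]
      have hfun : (fun j => eval v (flipS i j)) = flipL i v := by
        funext j
        simp only [flipS, flipL, LinearMap.coe_mk, AddHom.coe_mk]
        split_ifs <;> simp
      rw [hfun]
      exact hQinv (flipL i) (flipL_orth i) (flipL_shell i) v
    have hQperm : ∀ e : Equiv.Perm (Fin 4), rename (⇑e) Q = Q := by
      intro e
      apply MvPolynomial.funext
      intro v
      rw [eval_rename]
      exact hQinv (permL e) (permL_orth e) (permL_shell e) v
    have hQhom : Q.IsHomogeneous 6 := by
      refine hPhom.sub ?_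
      have := (isHomogeneous_C (Fin 4) a).mul P6_homog
      simpa using this
    have hQharm : IsHarmonic Q := by
      rw [IsHarmonic]
      have hsplit : ∑ i : Fin 4, pderiv i (pderiv i Q)
          = (∑ i : Fin 4, pderiv i (pderiv i P)) - C a * ∑ i : Fin 4, pderiv i (pderiv i P6) := by
        rw [hQdef, Finset.mul_sum, ← Finset.sum_sub_distrib]
        apply Finset.sum_congr rfl
        intro i _
        rw [map_sub, map_sub]
        congr 1
        rw [pderiv_C_mul, pderiv_C_mul]
      rw [hsplit, hPharm, P6_harm]
      simp
    have hQa : coeff (E ![6,0,0,0]) Q = 0 := by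
      rw [E_6000, hQdef, coeff_sub, coeff_C_mul, coeff_P6_top, ← hadef]
      ring
    have hQ0 : Q = 0 := zero_of_relations Q hQhom hQharm hQflip hQperm hQa
    have : P = C a * P6 := by
      have := sub_eq_zero.mp hQ0
      simpa using this
    rw [this, MvPolynomial.smul_eq_C_mul]
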